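/- Let G be a group and Δ a subgroup of G contained in the center Z(G) (so Δ is normal in G). If the quotient group G⧸Δ is perfect, then the commutator subgroup [G,G] of G is itself perfect: [[G,G],[G,G]] = [G,G]. -/

import Mathlib

/-- If `Δ` is a central subgroup of `G` and `G⧸Δ` is perfect, then the commutator
subgroup `[G,G]` is itself perfect: `[[G,G],[G,G]] = [G,G]`. -/
theorem central_quotient_perfect_commutator_perfect (G : Type*) [Group G]
    (Δ : Subgroup G) (hle : Δ ≤ Subgroup.center G) [Δ.Normal]
    (hperf : commutator (G ⧸ Δ) = ⊤) :
    ⁅commutator G, commutator G⁆ = commutator G := by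
  set K := commutator G with hK
  have hsup : K ⊔ Δ = ⊤ := by
    have hmap : K.map (QuotientGroup.mk' Δ) = ⊤ := by
      rw [hK, commutator_def, Subgroup.map_commutator,
        Subgroup.map_top_of_surjective _ (QuotientGroup.mk'_surjective Δ), ← commutator_def,
        hperf]
    have h := Subgroup.comap_map_eq (QuotientGroup.mk' Δ) K
    rw [hmap, QuotientGroup.ker_mk'] at h
    simpa using h.symm
  refine le_antisymm (Subgroup.commutator_le.mpr
    (fun g hg h hh => Subgroup.mul_mem _ (Subgroup.mul_mem _ (Subgroup.mul_mem _ hg hh)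
      (Subgroup.inv_mem _ hg)) (Subgroup.inv_mem _ hh))) ?_
  rw [hK, commutator_def]
  rw [Subgroup.commutator_le]
  intro g _ h _
  have hg : g ∈ (↑(K ⊔ Δ) : Set G) := by rw [hsup]; trivial
  have hh : h ∈ (↑(K ⊔ Δ) : Set G) := by rw [hsup]; trivial
  rw [Subgroup.mul_normal] at hg hh
  obtain ⟨k, hk, δ, hδ, rfl⟩ := hg
  obtain ⟨k', hk', δ', hδ', rfl⟩ := hh
  have c1 : ∀ x : G, δ * x = x * δ := fun x =>
    ((Subgroup.mem_center_iff.mp (hle hδ)) x).symm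
  have c2 : ∀ x : G, δ' * x = x * δ' := fun x =>
    ((Subgroup.mem_center_iff.mp (hle hδ')) x).symm
  have hconj1 : ∀ b : G, δ * b * δ⁻¹ = b := fun b => by
    rw [c1 b, mul_inv_cancel_right]
  have hconj2 : ∀ b : G, δ' * b * δ'⁻¹ = b := fun b => by
    rw [c2 b, mul_inv_cancel_right]
  open scoped commutatorElement in
  have left : ∀ a b : G, ⁅a * δ, b⁆ = ⁅a, b⁆ := by
    intro a b
    calc ⁅a * δ, b⁆ = a * (δ * b * δ⁻¹) * a⁻¹ * b⁻¹ := by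
          rw [commutatorElement_def]; group
      _ = ⁅a, b⁆ := by rw [hconj1, commutatorElement_def]
  open scoped commutatorElement in
  have right : ∀ a b : G, ⁅a, b * δ'⁆ = ⁅a, b⁆ := by
    intro a b
    calc ⁅a, b * δ'⁆ = a * b * (δ' * a⁻¹ * δ'⁻¹) * b⁻¹ := by
          rw [commutatorElement_def]; group
      _ = ⁅a, b⁆ := by rw [hconj2, commutatorElement_def]
  open scoped commutatorElement in
  have key : ⁅k * δ, k' * δ'⁆ = ⁅k, k'⁆ := by rw [left, right]
  rw [key]
  exact Subgroup.commutator_mem_commutator hk hk'
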